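/- arXiv:2002.03701 — 7 statements merged into one kernel-verified Lean document; each statement's English description precedes it below -/
import Mathlib

section
/- Let H be a complex Hilbert space, U a unitary operator on H, and let r be a real number with 0 ≤ r < π/2. Suppose that the spectrum of U is contained in the arc {exp(i·q) : q ∈ [−r, r]} ⊆ ℂ. Then there exists a unique bounded operator A on H such that A is self-adjoint, the spectrum of A is contained in the image of the real interval [−r, r] in ℂ, and exp(i • A) = U (operator exponential of the scalar multiple i • A). -/
open Complex in
/-- `arg (exp (q i)) = q` for `q ∈ [-r, r]` with `r < π/2`. -/
lemma arg_exp_aux {r q : ℝ} (hr : r < Real.pi / 2) (hq : q ∈ Set.Icc (-r) r) :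
    Complex.arg (Complex.exp (q * Complex.I)) = q := by
  have hπ : Real.pi / 2 < Real.pi := by
    have := Real.pi_pos; linarith
  have h1 : -Real.pi < q := by
    have := hq.1; linarith
  have h2 : q ≤ Real.pi := by
    have := hq.2; linarith
  rw [Complex.exp_mul_I, Complex.arg_cos_add_sin_mul_I ⟨h1, h2⟩]

/-- Points on the arc have positive real part. -/
lemma re_exp_aux {r q : ℝ} (hr0 : 0 ≤ r) (hr : r < Real.pi / 2) (hq : q ∈ Set.Icc (-r) r) :
    0 < (Complex.exp (q * Complex.I)).re := by
  rw [Complex.exp_mul_I, ← Complex.ofReal_cos, ← Complex.ofReal_sin]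
  simp only [Complex.add_re, Complex.ofReal_re, Complex.mul_re, Complex.I_re, Complex.I_im,
    Complex.ofReal_im, mul_zero, zero_mul, mul_one, sub_zero, zero_sub]
  have : 0 < Real.cos q := by
    apply Real.cos_pos_of_mem_Ioo
    constructor
    · have := hq.1; linarith
    · have := hq.2; linarith
  simpa using this

/-- If `U` is a unitary operator whose spectrum is contained in the arc
`{exp(i q) : q ∈ [-r, r]}` with `0 ≤ r < π/2`, then there is a unique bounded
self-adjoint operator `A` with spectrum contained in `[-r, r]` such that
`exp(i • A) = U`. -/
theorem stmt4
    {H : Type*} [NormedAddCommGroup H] [InnerProductSpace ℂ H] [CompleteSpace H]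
    (U : H →L[ℂ] H) (hU : U ∈ unitary (H →L[ℂ] H))
    (r : ℝ) (hr0 : 0 ≤ r) (hr : r < Real.pi / 2)
    (hspec : spectrum ℂ U ⊆ {z : ℂ | ∃ q ∈ Set.Icc (-r) r, z = Complex.exp (q * Complex.I)}) :
    ∃! A : H →L[ℂ] H, IsSelfAdjoint A ∧
      spectrum ℂ A ⊆ (fun q : ℝ => (q : ℂ)) '' Set.Icc (-r) r ∧
      NormedSpace.exp (Complex.I • A) = U := by
  have hUn : IsStarNormal U := isStarNormal_of_mem_unitary hU
  set f : ℂ → ℂ := fun z => (Complex.arg z : ℂ) with hf_def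
  -- continuity of f on the arc
  have hcont_arc : ∀ s : Set ℂ,
      (s ⊆ {z : ℂ | ∃ q ∈ Set.Icc (-r) r, z = Complex.exp (q * Complex.I)}) →
      ContinuousOn f s := by
    intro s hs z hz
    obtain ⟨q, hq, rfl⟩ := hs hz
    apply ContinuousAt.continuousWithinAt
    apply Complex.continuous_ofReal.continuousAt.comp
    apply Complex.continuousAt_arg
    rw [Complex.mem_slitPlane_iff]
    exact Or.inl (re_exp_aux hr0 hr hq)
  have hcontU : ContinuousOn f (spectrum ℂ U) := hcont_arc _ hspec
  set A : H →L[ℂ] H := cfc f U with hA_def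
  have hAn : IsStarNormal A := cfc_predicate f U
  -- A is selfadjoint
  have hAsa : IsSelfAdjoint A := by
    rw [hA_def, IsSelfAdjoint, ← cfc_star]
    exact cfc_congr fun z _ => Complex.conj_ofReal _
  -- spectrum of A
  have hAspec : spectrum ℂ A ⊆ (fun q : ℝ => (q : ℂ)) '' Set.Icc (-r) r := by
    rw [hA_def, cfc_map_spectrum f U]
    rintro _ ⟨z, hz, rfl⟩
    obtain ⟨q, hq, rfl⟩ := hspec hz
    exact ⟨q, hq, by simp [hf_def, arg_exp_aux hr hq]⟩
  -- exp (i • A) = U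
  have hAexp : NormedSpace.exp (Complex.I • A) = U := by
    have h1 : Complex.I • A = cfc (fun z => Complex.I • f z) U := by
      rw [hA_def, cfc_smul Complex.I f U hcontU]
    have hg : ContinuousOn (fun z => Complex.I • f z) (spectrum ℂ U) :=
      (continuous_const_smul Complex.I).comp_continuousOn hcontU
    rw [h1, ← CFC.complex_exp_eq_normedSpace_exp (cfc_predicate _ U),
      ← cfc_comp Complex.exp (fun z => Complex.I • f z) U hUn
        Complex.continuous_exp.continuousOn hg]
    calc cfc (Complex.exp ∘ fun z => Complex.I • f z) U
        = cfc (id : ℂ → ℂ) U := by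
          apply cfc_congr
          intro z hz
          obtain ⟨q, hq, rfl⟩ := hspec hz
          simp only [Function.comp_apply, hf_def, smul_eq_mul, id_eq]
          rw [arg_exp_aux hr hq, mul_comm]
      _ = U := cfc_id ℂ U
  refine ⟨A, ⟨hAsa, hAspec, hAexp⟩, ?_⟩
  -- uniqueness
  rintro B ⟨hBsa, hBspec, hBexp⟩
  have hBn : IsStarNormal B := hBsa.isStarNormal
  set g : ℂ → ℂ := fun z => Complex.exp (Complex.I * z) with hg_def
  have hgcont : ContinuousOn g (spectrum ℂ B) :=
    (Complex.continuous_exp.comp (continuous_const.mul continuous_id)).continuousOn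
  have hUB : U = cfc g B := by
    have h1 : Complex.I • B = cfc (fun z => Complex.I • (id z : ℂ)) B := by
      rw [cfc_smul Complex.I (id : ℂ → ℂ) B continuousOn_id, cfc_id ℂ B]
    rw [← hBexp, h1, ← CFC.complex_exp_eq_normedSpace_exp (cfc_predicate _ B),
      ← cfc_comp Complex.exp (fun z => Complex.I • (id z : ℂ)) B hBn Complex.continuous_exp.continuousOn
        ((continuous_const_smul Complex.I).continuousOn)]
    exact cfc_congr fun z _ => by simp [hg_def]
  -- image of spectrum of B under g lands in the arc
  have himg : g '' spectrum ℂ B ⊆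
      {z : ℂ | ∃ q ∈ Set.Icc (-r) r, z = Complex.exp (q * Complex.I)} := by
    rintro _ ⟨z, hz, rfl⟩
    obtain ⟨q, hq, rfl⟩ := hBspec hz
    exact ⟨q, hq, by rw [hg_def]; ring_nf⟩
  have hfg : ContinuousOn f (g '' spectrum ℂ B) := hcont_arc _ himg
  calc B = cfc (id : ℂ → ℂ) B := (cfc_id ℂ B).symm
    _ = cfc (f ∘ g) B := by
        apply cfc_congr
        intro z hz
        obtain ⟨q, hq, rfl⟩ := hBspec hz
        simp only [id_eq, Function.comp_apply, hg_def, hf_def]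
        rw [mul_comm, arg_exp_aux hr hq]
    _ = cfc f (cfc g B) := cfc_comp f g B hBn hfg hgcont
    _ = A := by rw [← hUB, hA_def]
end

section
/- Let H be a complex Hilbert space and B a bounded self-adjoint operator on H with operator norm ‖B‖ < 1/9. Let A = exp(i • B) (operator exponential), and let K be a closed subspace of H such that A maps K into K and the adjoint A† maps K into K. Then B maps K into K. -/
open scoped Real

/-- If `B` is a bounded self-adjoint operator with `‖B‖ < 1/9`,
`A = exp(i • B)`, and `K` is a closed subspace invariant under both `A` and its
adjoint, then `K` is invariant under `B`. -/
theorem stmt6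
    {H : Type*} [NormedAddCommGroup H] [InnerProductSpace ℂ H] [CompleteSpace H]
    (B : H →L[ℂ] H) (hB : IsSelfAdjoint B) (hnorm : ‖B‖ < 1 / 9)
    (A : H →L[ℂ] H) (hA : A = NormedSpace.exp (Complex.I • B))
    (K : Submodule ℂ H) (hK : IsClosed (K : Set H))
    (hAK : ∀ x ∈ K, A x ∈ K)
    (hAK' : ∀ x ∈ K, ContinuousLinearMap.adjoint A x ∈ K) :
    ∀ x ∈ K, B x ∈ K := by
  rcases subsingleton_or_nontrivial H with hH | hH
  · intro x hx
    have : B x = x := Subsingleton.elim _ _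
    rwa [this]
  have hπ : (3 : ℝ) < π := Real.pi_gt_three
  have hBn : IsStarNormal B := hB.isStarNormal
  set f : ℂ → ℂ := fun z => Complex.exp (Complex.I * z) with hf_def
  set g : ℂ → ℂ := fun z => (-Complex.I) * Complex.log z with hg_def
  have hf_cont : Continuous f := Complex.continuous_exp.comp (continuous_const.mul continuous_id)
  have hIBstar : star (Complex.I • B) = -(Complex.I • B) := by
    rw [star_smul, hB.star_eq, Complex.star_def, Complex.conj_I, neg_smul]
  have hIBn : IsStarNormal (Complex.I • B) := ⟨by rw [hIBstar]; exact (Commute.refl _).neg_left⟩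
  have hAn : IsStarNormal A := by
    constructor
    rw [hA, NormedSpace.star_exp]
    have hc : Commute (star (Complex.I • B)) (Complex.I • B) :=
      hIBstar ▸ (Commute.refl (Complex.I • B)).neg_left
    exact hc.exp
  -- spectrum facts
  have hspec : ∀ z ∈ spectrum ℂ B, z = (z.re : ℂ) ∧ |z.re| < 1 / 9 := by
    intro z hz
    have h1 : z = (z.re : ℂ) := hB.mem_spectrum_eq_re hz
    have h2 : ‖z‖ ≤ ‖B‖ := spectrum.norm_le_norm_of_mem hz
    have h3 : |z.re| ≤ ‖z‖ := by
      simpa using Complex.abs_re_le_norm z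
    exact ⟨h1, lt_of_le_of_lt (h3.trans h2) hnorm⟩
  -- continuity of g on the image of the spectrum
  have hg_cont : ContinuousOn g (f '' spectrum ℂ B) := by
    refine continuousOn_of_forall_continuousAt ?_
    rintro w ⟨z, hz, rfl⟩
    obtain ⟨hz1, hz2⟩ := hspec z hz
    refine continuousAt_const.mul (continuousAt_clog ?_)
    left
    have harg : Complex.I * z = (z.re : ℂ) * Complex.I := by
      conv_lhs => rw [hz1]
      ring
    have hre : (f z).re = Real.cos z.re := by
      simp only [hf_def, harg, Complex.exp_ofReal_mul_I_re]
    rw [hre]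
    have := abs_lt.mp hz2
    exact Real.cos_pos_of_mem_Ioo ⟨by nlinarith [this.1], by nlinarith [this.2]⟩
  -- A = cfc f B
  have h1 : cfc f B = cfc Complex.exp (Complex.I • B) := by
    have := cfc_comp_const_mul (R := ℂ) Complex.I Complex.exp B
      (Complex.continuous_exp.continuousOn) hBn
    simpa [hf_def] using this
  have h2 : cfc Complex.exp (Complex.I • B) = NormedSpace.exp (Complex.I • B) :=
    CFC.complex_exp_eq_normedSpace_exp hIBn
  have hA' : A = cfc f B := by rw [hA, ← h2, ← h1]
  -- B = cfc g A
  have hgf : cfc (fun z => g (f z)) B = cfc g (cfc f B) :=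
    cfc_comp' g f B hg_cont hf_cont.continuousOn hBn
  have hid : cfc (fun z => g (f z)) B = B := by
    have heq : (spectrum ℂ B).EqOn (fun z => g (f z)) id := by
      intro z hz
      obtain ⟨hz1, hz2⟩ := hspec z hz
      have him : (Complex.I * z).im = z.re := by
        simp [Complex.mul_im]
      have hbd := abs_lt.mp hz2
      have hlog : Complex.log (Complex.exp (Complex.I * z)) = Complex.I * z :=
        Complex.log_exp (by rw [him]; nlinarith [hbd.1]) (by rw [him]; nlinarith [hbd.2])
      show g (f z) = z
      simp only [hg_def, hf_def, hlog]
      calc -Complex.I * (Complex.I * z) = -(Complex.I * Complex.I) * z := by ring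
        _ = z := by rw [Complex.I_mul_I]; ring
    rw [cfc_congr heq, cfc_id ℂ B]
  have hBg : B = cfc g A := by rw [hA', ← hgf, hid]
  have hgA_cont : ContinuousOn g (spectrum ℂ A) := by
    rw [hA', cfc_map_spectrum f B hBn hf_cont.continuousOn]
    exact hg_cont
  -- B belongs to the elemental C*-algebra generated by A
  have hBmem : B ∈ StarAlgebra.elemental ℂ A := by
    rw [hBg, cfc_apply g A hAn hgA_cont, cfcHom_eq_of_isStarNormal]
    exact SetLike.coe_mem _
  -- the set of operators preserving K is closed and contains the star algebra generated by A
  set S : Set (H →L[ℂ] H) := {T | ∀ y ∈ K, T y ∈ K} with hS_def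
  have hS_closed : IsClosed S := by
    have : S = ⋂ y ∈ K, (ContinuousLinearMap.apply ℂ H y) ⁻¹' (K : Set H) := by
      ext T
      simp [hS_def, Set.mem_iInter]
    rw [this]
    exact isClosed_biInter fun y hy => hK.preimage (ContinuousLinearMap.apply ℂ H y).continuous
  have hadj : (StarAlgebra.adjoin ℂ ({A} : Set (H →L[ℂ] H)) : Set (H →L[ℂ] H)) ⊆ S := by
    intro T hT
    have hT' : T ∈ Algebra.adjoin ℂ (({A} : Set (H →L[ℂ] H)) ∪ star {A}) := by
      have h := StarSubalgebra.mem_toSubalgebra.mpr hT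
      rwa [StarAlgebra.adjoin_toSubalgebra] at h
    clear hT
    induction hT' using Algebra.adjoin_induction with
    | mem t ht =>
      rcases ht with ht | ht
      · rw [Set.mem_singleton_iff] at ht
        subst ht
        exact hAK
      · rw [Set.star_singleton, Set.mem_singleton_iff] at ht
        subst ht
        rw [ContinuousLinearMap.star_eq_adjoint]
        exact hAK'
    | algebraMap c =>
      intro y hy
      have : (algebraMap ℂ (H →L[ℂ] H) c) y = c • y := rfl
      rw [this]
      exact K.smul_mem c hy
    | add a b _ _ hpa hpb =>
      intro y hy
      rw [ContinuousLinearMap.add_apply]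
      exact K.add_mem (hpa y hy) (hpb y hy)
    | mul a b _ _ hpa hpb =>
      intro y hy
      rw [ContinuousLinearMap.mul_apply]
      exact hpa _ (hpb y hy)
  have hmem : B ∈ S := by
    have : (StarAlgebra.elemental ℂ A : Set (H →L[ℂ] H)) ⊆ S := by
      have hcl : (StarAlgebra.elemental ℂ A : Set (H →L[ℂ] H)) =
          closure (StarAlgebra.adjoin ℂ ({A} : Set (H →L[ℂ] H)) : Set (H →L[ℂ] H)) := rfl
      rw [hcl]
      exact hS_closed.closure_subset_iff.mpr hadj
    exact this hBmem
  exact hmem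
end

section
/- Let M > 0 be a real number and S = {λ ∈ ℂ : |Re λ| ≤ M and |Im λ| ≤ M}. Let θ : C(S, ℂ) → ℂ be a generalized distribution, i.e. θ is additive, conjugate-homogeneous (θ(c • f) = conj(c) · θ(f) for all c ∈ ℂ), and there is K ≥ 0 with |θ(f)| ≤ K · ‖f‖ for all f, where ‖·‖ is the sup norm. For r ∈ ℝ and ε > 0, an I_r^ε-function is an f ∈ C(S, ℂ) with ‖f‖ ≤ 1 such that f(x) = 0 for every x ∈ S with |Re x − r| ≥ ε; a J_r^ε-function is defined with Im x in place of Re x. Say the line I_r is good for θ if for every δ > 0 there is ε > 0 such that |θ(f)| < δ for every I_r^ε-function f; similarly for J_r. Then the set {r ∈ [−M, M] : I_r is not good for θ} is countable, and likewise the set {r ∈ [−M, M] : J_r is not good for θ} is countable. -/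
/-- The closed square `S = {λ : |Re λ| ≤ M, |Im λ| ≤ M}`. -/
def Sq (M : ℝ) : Set ℂ := {z : ℂ | |z.re| ≤ M ∧ |z.im| ≤ M}

theorem isCompact_Sq (M : ℝ) : IsCompact (Sq M) := by
  apply Metric.isCompact_of_isClosed_isBounded
  · exact (isClosed_le (Complex.continuous_re.abs) continuous_const).inter
      (isClosed_le (Complex.continuous_im.abs) continuous_const)
  · apply (Metric.isBounded_closedBall (x := (0 : ℂ)) (r := M + M)).subset
    intro z hz
    simp only [Metric.mem_closedBall, dist_zero_right]
    calc ‖z‖ ≤ |z.re| + |z.im| := Complex.norm_le_abs_re_add_abs_im z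
      _ ≤ M + M := add_le_add hz.1 hz.2

instance (M : ℝ) : CompactSpace (Sq M) := isCompact_iff_compactSpace.mp (isCompact_Sq M)

/-- The line `I_r` (resp. `J_r`) is good for `θ`: for every `δ > 0` there is `ε > 0`
such that `|θ(f)| < δ` for every `f` of sup-norm at most `1` vanishing at every point
whose real (resp. imaginary) part is at distance at least `ε` from `r`. -/
def GoodLine (M : ℝ) (θ : C(Sq M, ℂ) → ℂ) (re : Bool) (r : ℝ) : Prop :=
  ∀ δ > (0 : ℝ), ∃ ε > (0 : ℝ), ∀ f : C(Sq M, ℂ), ‖f‖ ≤ 1 →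
    (∀ x : Sq M, ε ≤ |(if re then (x : ℂ).re else (x : ℂ).im) - r| → f x = 0) →
    ‖θ f‖ < δ

theorem aux_countable (M : ℝ) (θ : C(Sq M, ℂ) → ℂ)
    (hadd : ∀ f g, θ (f + g) = θ f + θ g)
    (hsmul : ∀ (c : ℂ) (f), θ (c • f) = (starRingEnd ℂ) c * θ f)
    (K : ℝ) (hK : 0 ≤ K)
    (hbound : ∀ f, ‖θ f‖ ≤ K * ‖f‖)
    (φ : Sq M → ℝ) :
    {r : ℝ | ¬ ∀ δ > (0:ℝ), ∃ ε > (0:ℝ), ∀ f : C(Sq M, ℂ), ‖f‖ ≤ 1 →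
      (∀ x : Sq M, ε ≤ |φ x - r| → f x = 0) → ‖θ f‖ < δ}.Countable := by
  classical
  have h0 : θ 0 = 0 := by have := hsmul 0 0; simpa using this
  have hsum : ∀ (T : Finset ℝ) (F : ℝ → C(Sq M, ℂ)),
      θ (∑ i ∈ T, F i) = ∑ i ∈ T, θ (F i) := by
    intro T F
    induction T using Finset.induction_on with
    | empty => simpa using h0
    | insert _ _ h ih => rw [Finset.sum_insert h, hadd, ih, Finset.sum_insert h]
  set B : ℕ → Set ℝ := fun n => {r | ∀ ε > (0:ℝ), ∃ f : C(Sq M, ℂ), ‖f‖ ≤ 1 ∧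
      (∀ x : Sq M, ε ≤ |φ x - r| → f x = 0) ∧ 1/(n+1) ≤ ‖θ f‖} with hB
  have hfin : ∀ n, (B n).Finite := by
    intro n
    by_contra hinf
    have hinf' : (B n).Infinite := hinf
    obtain ⟨T, hT, hcard⟩ := hinf'.exists_subset_card_eq (⌊K*(n+1)⌋₊ + 1)
    obtain ⟨ε, hε0, hsep⟩ : ∃ ε > (0:ℝ), ∀ r ∈ T, ∀ r' ∈ T, r ≠ r' → 2*ε ≤ |r - r'| := by
      set P := (T ×ˢ T).filter (fun p : ℝ × ℝ => p.1 ≠ p.2) with hP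
      by_cases hPn : P.Nonempty
      · refine ⟨P.inf' hPn (fun p => |p.1 - p.2|) / 2, ?_, ?_⟩
        · have hpos : ∀ p ∈ P, 0 < |p.1 - p.2| := by
            intro p hp
            rw [hP, Finset.mem_filter] at hp
            exact abs_sub_pos.mpr hp.2
          have := (Finset.lt_inf'_iff hPn).mpr hpos
          linarith
        · intro r hr r' hr' hne
          have hmem : (r, r') ∈ P := by
            rw [hP, Finset.mem_filter, Finset.mem_product]
            exact ⟨⟨hr, hr'⟩, hne⟩
          have := Finset.inf'_le (fun p : ℝ × ℝ => |p.1 - p.2|) hmem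
          simp only at this
          linarith
      · refine ⟨1, one_pos, ?_⟩
        intro r hr r' hr' hne
        exfalso
        apply hPn
        refine ⟨(r, r'), ?_⟩
        rw [hP, Finset.mem_filter, Finset.mem_product]
        exact ⟨⟨hr, hr'⟩, hne⟩
    have hch : ∀ r : ℝ, ∃ f : C(Sq M, ℂ), r ∈ T → (‖f‖ ≤ 1 ∧
        (∀ x : Sq M, ε ≤ |φ x - r| → f x = 0) ∧ 1/(n+1) ≤ ‖θ f‖) := by
      intro r
      by_cases hr : r ∈ T
      · obtain ⟨f, hf⟩ := hT hr ε hε0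
        exact ⟨f, fun _ => hf⟩
      · exact ⟨0, fun h => absurd h hr⟩
    choose f hf using hch
    set a : ℝ → ℝ := fun r => ‖θ (f r)‖ with ha
    have hanonneg : ∀ r, 0 ≤ a r := fun r => norm_nonneg _
    have hapos : ∀ r ∈ T, 1/(n+1:ℝ) ≤ a r := fun r hr => (hf r hr).2.2
    have han0 : ∀ r ∈ T, a r ≠ 0 := by
      intro r hr
      have h1 : (0:ℝ) < 1/(n+1:ℝ) := by positivity
      exact ne_of_gt (lt_of_lt_of_le h1 (hapos r hr))
    set c : ℝ → ℂ := fun r => θ (f r) / (a r : ℂ) with hc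
    set g : C(Sq M, ℂ) := ∑ r ∈ T, c r • f r with hg
    have hθg : θ g = ((∑ r ∈ T, a r : ℝ) : ℂ) := by
      rw [hg, hsum]
      push_cast
      refine Finset.sum_congr rfl ?_
      intro r hr
      rw [hsmul]
      have han : (a r : ℂ) ≠ 0 := by exact_mod_cast han0 r hr
      simp only [hc, map_div₀, Complex.conj_ofReal]
      rw [div_mul_eq_mul_div, Complex.conj_mul']
      have hnorm : ‖θ (f r)‖ = a r := rfl
      rw [hnorm, pow_two, mul_div_assoc, div_self han, mul_one]
    have habs : ‖θ g‖ = ∑ r ∈ T, a r := by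
      rw [hθg, Complex.norm_real, Real.norm_of_nonneg (Finset.sum_nonneg (fun r _ => hanonneg r))]
    have hgnorm : ‖g‖ ≤ 1 := by
      rw [ContinuousMap.norm_le _ zero_le_one]
      intro x
      have hgx : g x = ∑ r ∈ T, c r * f r x := by
        rw [hg]
        simp [ContinuousMap.sum_apply, smul_eq_mul]
      by_cases hx : ∃ r ∈ T, f r x ≠ 0
      · obtain ⟨r0, hr0, hfr0⟩ := hx
        have hnear : ∀ r ∈ T, f r x ≠ 0 → |φ x - r| < ε := by
          intro r hr hfr
          by_contra hge
          push_neg at hge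
          exact hfr ((hf r hr).2.1 x hge)
        have hsingle : g x = c r0 * f r0 x := by
          rw [hgx]
          refine Finset.sum_eq_single_of_mem r0 hr0 ?_
          intro b hb hbne
          have hfb : f b x = 0 := by
            by_contra hfb
            have h1 := hnear r0 hr0 hfr0
            have h2 := hnear b hb hfb
            have h3 := hsep r0 hr0 b hb (Ne.symm hbne)
            have h4 : |r0 - b| ≤ |r0 - φ x| + |φ x - b| := abs_sub_le _ _ _
            rw [abs_sub_comm r0 (φ x)] at h4
            linarith
          rw [hfb, mul_zero]
        rw [hsingle]
        have hc1 : ‖c r0‖ = 1 := by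
          rw [hc]
          simp only [norm_div, Complex.norm_real, Real.norm_eq_abs, abs_of_nonneg (hanonneg r0)]
          exact div_self (han0 r0 hr0)
        calc ‖c r0 * f r0 x‖ = ‖c r0‖ * ‖f r0 x‖ := by
              rw [norm_mul]
          _ = ‖f r0 x‖ := by rw [hc1, one_mul]
          _ ≤ ‖f r0‖ := (f r0).norm_coe_le_norm x
          _ ≤ 1 := (hf r0 hr0).1
      · push_neg at hx
        rw [hgx, Finset.sum_eq_zero (fun r hr => by rw [hx r hr, mul_zero])]
        simp
    have hlow : (T.card : ℝ) * (1/(n+1)) ≤ ∑ r ∈ T, a r := by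
      have := Finset.card_nsmul_le_sum T a (1/(n+1:ℝ)) hapos
      simpa [nsmul_eq_mul] using this
    have hup : (∑ r ∈ T, a r) ≤ K := by
      calc (∑ r ∈ T, a r) = ‖θ g‖ := habs.symm
        _ ≤ K * ‖g‖ := hbound g
        _ ≤ K * 1 := mul_le_mul_of_nonneg_left hgnorm hK
        _ = K := mul_one K
    have hcontra : ((⌊K*(n+1)⌋₊ + 1 : ℕ) : ℝ) ≤ K * ((n:ℝ)+1) := by
      rw [hcard] at hlow
      have hn1 : (0:ℝ) < (n:ℝ)+1 := by positivity
      have h6 : ((⌊K*(n+1)⌋₊ + 1 : ℕ) : ℝ) * (1/((n:ℝ)+1)) ≤ K := by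
        push_cast at hlow ⊢
        linarith [hlow.trans hup]
      rw [mul_one_div, div_le_iff₀ hn1] at h6
      exact h6
    have h5 : ⌊K*(n+1)⌋₊ + 1 ≤ ⌊K*((n:ℝ)+1)⌋₊ := Nat.le_floor hcontra
    push_cast at h5
    omega
  apply Set.Countable.mono _ (Set.countable_iUnion (fun n => (hfin n).countable))
  intro r hr
  simp only [Set.mem_setOf_eq] at hr
  push_neg at hr
  obtain ⟨δ, hδ0, hδ⟩ := hr
  obtain ⟨n, hn⟩ := exists_nat_one_div_lt hδ0
  refine Set.mem_iUnion.mpr ⟨n, ?_⟩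
  intro ε hε
  obtain ⟨g, hg1, hg2, hg3⟩ := hδ ε hε
  exact ⟨g, hg1, hg2, le_trans (le_of_lt (by exact_mod_cast hn)) hg3⟩

/-- For a generalized distribution `θ` on `C(S, ℂ)`, the set of
`r ∈ [−M, M]` such that the vertical line `I_r` is not good for `θ` is countable,
and likewise for the horizontal lines `J_r`. -/
theorem stmt11
    (M : ℝ) (hM : 0 < M)
    (θ : C(Sq M, ℂ) → ℂ)
    (hadd : ∀ f g, θ (f + g) = θ f + θ g)
    (hsmul : ∀ (c : ℂ) (f), θ (c • f) = (starRingEnd ℂ) c * θ f)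
    (K : ℝ) (hK : 0 ≤ K)
    (hbound : ∀ f, ‖θ f‖ ≤ K * ‖f‖) :
    {r ∈ Set.Icc (-M) M | ¬ GoodLine M θ true r}.Countable ∧
    {r ∈ Set.Icc (-M) M | ¬ GoodLine M θ false r}.Countable := by
  constructor
  · apply Set.Countable.mono _
      (aux_countable M θ hadd hsmul K hK hbound (fun x => (x : ℂ).re))
    rintro r ⟨-, hbad⟩
    simp only [Set.mem_setOf_eq]
    intro hgood
    apply hbad
    intro δ hδ
    obtain ⟨ε, hε, h⟩ := hgood δ hδ
    exact ⟨ε, hε, fun f hf hv => h f hf (fun x hx => hv x (by simpa using hx))⟩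
  · apply Set.Countable.mono _
      (aux_countable M θ hadd hsmul K hK hbound (fun x => (x : ℂ).im))
    rintro r ⟨-, hbad⟩
    simp only [Set.mem_setOf_eq]
    intro hgood
    apply hbad
    intro δ hδ
    obtain ⟨ε, hε, h⟩ := hgood δ hδ
    exact ⟨ε, hε, fun f hf hv => h f hf (fun x hx => hv x (by simpa using hx))⟩
end

section
/- Let M > 0 and S = {λ ∈ ℂ : |Re λ| ≤ M and |Im λ| ≤ M}. Let θ : C(S, ℂ) → ℂ be a generalized distribution: additive, conjugate-homogeneous (θ(c • f) = conj(c)·θ(f)), and bounded by K ≥ 0 with respect to the sup norm. Let D be an ultrafilter on ℕ, μ_N(X) = Σ_{k : λ_N(k) ∈ X} ξ_N(k)² weighted counting set functions with ξ_N(k) ≥ 0 and Σ_k ξ_N(k)² = 1, and ν : Set ℂ → ℝ a function such that for every X ⊆ ℂ, N ↦ μ_N(X) tends to ν(X) along D. For r ∈ ℝ and ε > 0 let I_r^ε = {λ ∈ ℂ : |Re λ − r| < ε}. Say I_r is good for θ if for every δ > 0 there is ε > 0 such that |θ(f)| < δ for every f ∈ C(S, ℂ) with ‖f‖ ≤ 1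 vanishing at every x ∈ S with |Re x − r| ≥ ε; say I_r is very good if it is good for θ and, in addition, for every δ > 0 there is ε > 0 with ν(I_r^ε) < δ. Then the set {r ∈ [−M, M] : I_r is not very good} is countable; likewise for the horizontal lines J_r (with Im in place of Re). -/
/-- The weighted counting set function `μ_N(X) = Σ_{k : λ_N(k) ∈ X} ξ_N(k)²`. -/
noncomputable def countMeasure {n : ℕ} (lam : Fin n → ℂ) (xi : Fin n → ℝ) (X : Set ℂ) : ℝ :=
  ∑ k : Fin n, Set.indicator X (fun _ => xi k ^ 2) (lam k)

/-- The line `I_r` (resp. `J_r`) is very good for `θ`: it is good for `θ`, and in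
addition the `ν`-value of the strip `{λ : |Re λ − r| < ε}` (resp. with `Im`) can be
made arbitrarily small. -/
def VeryGoodLine (M : ℝ) (θ : C(Sq M, ℂ) → ℂ) (ν : Set ℂ → ℝ) (re : Bool) (r : ℝ) : Prop :=
  GoodLine M θ re r ∧
  ∀ δ > (0 : ℝ), ∃ ε > (0 : ℝ),
    ν {z : ℂ | |(if re then z.re else z.im) - r| < ε} < δ


lemma exists_sep (T : Finset ℝ) :
    ∃ ε > (0:ℝ), ∀ r1 ∈ T, ∀ r2 ∈ T, r1 ≠ r2 → 2 * ε ≤ |r1 - r2| := by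
  rcases T.offDiag.eq_empty_or_nonempty with h | h
  · refine ⟨1, one_pos, fun r1 h1 r2 h2 hne => ?_⟩
    have : ((r1, r2) : ℝ × ℝ) ∈ T.offDiag := Finset.mem_offDiag.mpr ⟨h1, h2, hne⟩
    exact absurd this (by simp [h])
  · refine ⟨(T.offDiag.inf' h fun p => |p.1 - p.2|) / 2, ?_, ?_⟩
    · have : (0:ℝ) < T.offDiag.inf' h fun p => |p.1 - p.2| := by
        rw [Finset.lt_inf'_iff]
        intro p hp
        have := (Finset.mem_offDiag.mp hp).2.2
        simpa [abs_pos, sub_ne_zero] using this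
      linarith
    · intro r1 h1 r2 h2 hne
      have : (T.offDiag.inf' h fun p => |p.1 - p.2|) ≤ |(r1, r2).1 - (r1, r2).2| :=
        Finset.inf'_le _ (Finset.mem_offDiag.mpr ⟨h1, h2, hne⟩)
      simp only at this
      linarith

lemma finite_of_card_bound {s : Set ℝ} {δ C : ℝ} (hδ : 0 < δ)
    (h : ∀ T : Finset ℝ, ↑T ⊆ s → (T.card : ℝ) * δ ≤ C) : s.Finite := by
  by_contra hs
  obtain ⟨T, hTs, hcard⟩ := (Set.Infinite.exists_subset_card_eq hs) (⌈C/δ⌉₊ + 1)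
  have h1 := h T hTs
  rw [hcard] at h1
  have h2 : C / δ ≤ (⌈C/δ⌉₊ : ℝ) := Nat.le_ceil _
  have h3 : C ≤ (⌈C/δ⌉₊ : ℝ) * δ := by
    rw [div_le_iff₀ hδ] at h2; exact h2
  push_cast at h1
  nlinarith

lemma conj_unit_mul (z : ℂ) (hz : z ≠ 0) :
    (starRingEnd ℂ) (z / (‖z‖ : ℂ)) * z = (‖z‖ : ℂ) := by
  have h : (‖z‖ : ℂ) ≠ 0 := by
    simpa using hz
  rw [map_div₀, Complex.conj_ofReal, div_mul_eq_mul_div, mul_comm,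
    Complex.mul_conj, Complex.normSq_eq_norm_sq]
  field_simp
  push_cast
  ring

/-- For a fixed `δ > 0`, the set of `r` such that every strip around `r` has
`ν`-value at least `δ` is finite. -/
lemma nu_bad_finite
    (D : Ultrafilter ℕ)
    (DN : ℕ → ℕ) (lam : ∀ N, Fin (DN N) → ℂ) (xi : ∀ N, Fin (DN N) → ℝ)
    (hsum : ∀ N, ∑ k : Fin (DN N), xi N k ^ 2 = 1)
    (ν : Set ℂ → ℝ)
    (hν : ∀ X : Set ℂ,
      Filter.Tendsto (fun N => countMeasure (lam N) (xi N) X) (D : Filter ℕ) (nhds (ν X)))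
    (re : Bool) (δ : ℝ) (hδ : 0 < δ) :
    {r : ℝ | ∀ ε > (0:ℝ), δ ≤ ν {z : ℂ | |(if re then z.re else z.im) - r| < ε}}.Finite := by
  apply finite_of_card_bound hδ (C := 1)
  intro T hT
  obtain ⟨ε, hε, hsep⟩ := exists_sep T
  have key : ∀ N, ∑ r ∈ T,
      countMeasure (lam N) (xi N) {z : ℂ | |(if re then z.re else z.im) - r| < ε} ≤ 1 := by
    intro N
    rw [← hsum N]
    unfold countMeasure
    rw [Finset.sum_comm]
    apply Finset.sum_le_sum
    intro k _
    by_cases hcase : ∃ r0 ∈ T,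
        (lam N k) ∈ {z : ℂ | |(if re then z.re else z.im) - r0| < ε}
    · obtain ⟨r0, hr0T, hr0⟩ := hcase
      rw [Finset.sum_eq_single_of_mem r0 hr0T]
      · rw [Set.indicator_of_mem hr0]
      · intro r hrT hne
        apply Set.indicator_of_notMem
        intro hmem
        have h1 : |(if re then (lam N k).re else (lam N k).im) - r| < ε := hmem
        have h2 : |(if re then (lam N k).re else (lam N k).im) - r0| < ε := hr0
        have h3 := hsep r hrT r0 hr0T hne
        have h4 := abs_sub_le r (if re then (lam N k).re else (lam N k).im) r0
        have h5 : |r - (if re then (lam N k).re else (lam N k).im)|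
            = |(if re then (lam N k).re else (lam N k).im) - r| := abs_sub_comm _ _
        linarith
    · rw [Finset.sum_eq_zero]
      · exact sq_nonneg _
      · intro r hr
        exact Set.indicator_of_notMem (fun hmem => hcase ⟨r, hr, hmem⟩) _
  have hlim : Filter.Tendsto
      (fun N => ∑ r ∈ T,
        countMeasure (lam N) (xi N) {z : ℂ | |(if re then z.re else z.im) - r| < ε})
      (D : Filter ℕ)
      (nhds (∑ r ∈ T, ν {z : ℂ | |(if re then z.re else z.im) - r| < ε})) :=
    tendsto_finset_sum _ (fun r _ => hν _)
  have hle : ∑ r ∈ T, ν {z : ℂ | |(if re then z.re else z.im) - r| < ε} ≤ 1 :=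
    le_of_tendsto hlim (Filter.Eventually.of_forall key)
  calc (T.card : ℝ) * δ = ∑ _r ∈ T, δ := by rw [Finset.sum_const, nsmul_eq_mul]
    _ ≤ ∑ r ∈ T, ν {z : ℂ | |(if re then z.re else z.im) - r| < ε} :=
        Finset.sum_le_sum (fun r hr => hT hr ε hε)
    _ ≤ 1 := hle

/-- For a fixed `δ > 0`, the set of `r` such that every strip around `r` supports a
norm-one function with `|θ f| ≥ δ` is finite. -/
lemma theta_bad_finite
    (M : ℝ) (θ : C(Sq M, ℂ) → ℂ)
    (hadd : ∀ f g, θ (f + g) = θ f + θ g)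
    (hsmul : ∀ (c : ℂ) (f), θ (c • f) = (starRingEnd ℂ) c * θ f)
    (K : ℝ) (hK : 0 ≤ K)
    (hbound : ∀ f, ‖θ f‖ ≤ K * ‖f‖)
    (re : Bool) (δ : ℝ) (hδ : 0 < δ) :
    {r : ℝ | ∀ ε > (0:ℝ), ∃ f : C(Sq M, ℂ), ‖f‖ ≤ 1 ∧
      (∀ x : Sq M, ε ≤ |(if re then (x : ℂ).re else (x : ℂ).im) - r| → f x = 0) ∧
      δ ≤ ‖θ f‖}.Finite := by
  apply finite_of_card_bound hδ (C := K)
  intro T hT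
  obtain ⟨ε, hε, hsep⟩ := exists_sep T
  have hch : ∀ r ∈ T, ∃ f : C(Sq M, ℂ), ‖f‖ ≤ 1 ∧
      (∀ x : Sq M, ε ≤ |(if re then (x : ℂ).re else (x : ℂ).im) - r| → f x = 0) ∧
      δ ≤ ‖θ f‖ := fun r hr => hT hr ε hε
  choose! f hf1 hf2 hf3 using hch
  have hθne : ∀ r ∈ T, θ (f r) ≠ 0 := by
    intro r hr h0
    have := hf3 r hr
    rw [h0] at this
    simp at this
    linarith
  set c : ℝ → ℂ := fun r => θ (f r) / (‖θ (f r)‖ : ℂ) with hc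
  set g : C(Sq M, ℂ) := ∑ r ∈ T, c r • f r with hg
  have hθg : θ g = ((∑ r ∈ T, ‖θ (f r)‖ : ℝ) : ℂ) := by
    have h1 : θ g = ∑ r ∈ T, θ (c r • f r) :=
      map_sum (AddMonoidHom.mk' θ hadd) _ _
    rw [h1, Complex.ofReal_sum]
    apply Finset.sum_congr rfl
    intro r hr
    rw [hsmul, conj_unit_mul _ (hθne r hr)]
  have habsθg : ‖θ g‖ = ∑ r ∈ T, ‖θ (f r)‖ := by
    rw [hθg, Complex.norm_real, Real.norm_eq_abs, abs_of_nonneg]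
    exact Finset.sum_nonneg fun r _ => (norm_nonneg _)
  have hgnorm : ‖g‖ ≤ 1 := by
    rw [ContinuousMap.norm_le _ zero_le_one]
    intro x
    have hgx : g x = ∑ r ∈ T, c r * f r x := by
      rw [hg]
      simp [ContinuousMap.sum_apply]
    rw [hgx]
    have hlt : ∀ r ∈ T, f r x ≠ 0 →
        |(if re then (x : ℂ).re else (x : ℂ).im) - r| < ε := by
      intro r hr hne
      by_contra hge
      exact hne (hf2 r hr x (le_of_not_gt hge))
    by_cases hcase : ∃ r0 ∈ T, f r0 x ≠ 0
    · obtain ⟨r0, hr0T, hr0⟩ := hcase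
      rw [Finset.sum_eq_single_of_mem r0 hr0T]
      · have hc1 : ‖c r0‖ = 1 := by
          rw [hc]
          simp only [norm_div, Complex.norm_real, norm_norm]
          exact div_self (norm_ne_zero_iff.mpr (hθne r0 hr0T))
        calc ‖c r0 * f r0 x‖ = ‖c r0‖ * ‖f r0 x‖ := by
              rw [norm_mul]
          _ ≤ 1 * 1 := by
              apply mul_le_mul (le_of_eq hc1) _ (norm_nonneg _) zero_le_one
              exact le_trans ((f r0).norm_coe_le_norm x) (hf1 r0 hr0T)
          _ = 1 := one_mul 1
      · intro r hrT hne
        by_cases hfr : f r x = 0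
        · rw [hfr, mul_zero]
        · exfalso
          have h1 := hlt r hrT hfr
          have h2 := hlt r0 hr0T hr0
          have h3 := hsep r hrT r0 hr0T hne
          have h4 := abs_sub_le r (if re then (x : ℂ).re else (x : ℂ).im) r0
          have h5 : |r - (if re then (x : ℂ).re else (x : ℂ).im)|
              = |(if re then (x : ℂ).re else (x : ℂ).im) - r| := abs_sub_comm _ _
          linarith
    · push_neg at hcase
      rw [Finset.sum_eq_zero (fun r hr => by rw [hcase r hr, mul_zero])]
      simp
  calc (T.card : ℝ) * δ = ∑ _r ∈ T, δ := by rw [Finset.sum_const, nsmul_eq_mul]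
    _ ≤ ∑ r ∈ T, ‖θ (f r)‖ := Finset.sum_le_sum (fun r hr => hf3 r hr)
    _ = ‖θ g‖ := habsθg.symm
    _ ≤ K * ‖g‖ := hbound g
    _ ≤ K * 1 := mul_le_mul_of_nonneg_left hgnorm hK
    _ = K := mul_one K

/-- For a generalized distribution `θ` and the ultralimit `ν` of the
weighted counting measures, the set of `r ∈ [−M, M]` such that the vertical line `I_r`
is not very good is countable, and likewise for the horizontal lines `J_r`. -/
theorem stmt12
    (M : ℝ) (hM : 0 < M)
    (θ : C(Sq M, ℂ) → ℂ)
    (hadd : ∀ f g, θ (f + g) = θ f + θ g)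
    (hsmul : ∀ (c : ℂ) (f), θ (c • f) = (starRingEnd ℂ) c * θ f)
    (K : ℝ) (hK : 0 ≤ K)
    (hbound : ∀ f, ‖θ f‖ ≤ K * ‖f‖)
    (D : Ultrafilter ℕ)
    (DN : ℕ → ℕ) (lam : ∀ N, Fin (DN N) → ℂ) (xi : ∀ N, Fin (DN N) → ℝ)
    (hxi : ∀ N k, 0 ≤ xi N k) (hsum : ∀ N, ∑ k : Fin (DN N), xi N k ^ 2 = 1)
    (ν : Set ℂ → ℝ)
    (hν : ∀ X : Set ℂ,
      Filter.Tendsto (fun N => countMeasure (lam N) (xi N) X) (D : Filter ℕ) (nhds (ν X))) :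
    {r ∈ Set.Icc (-M) M | ¬ VeryGoodLine M θ ν true r}.Countable ∧
    {r ∈ Set.Icc (-M) M | ¬ VeryGoodLine M θ ν false r}.Countable := by
  have main : ∀ re : Bool, {r ∈ Set.Icc (-M) M | ¬ VeryGoodLine M θ ν re r}.Countable := by
    intro re
    have hGc : {r : ℝ | ¬ GoodLine M θ re r}.Countable := by
      have hsub : {r : ℝ | ¬ GoodLine M θ re r} ⊆
          ⋃ n : ℕ, {r : ℝ | ∀ ε > (0:ℝ), ∃ f : C(Sq M, ℂ), ‖f‖ ≤ 1 ∧
            (∀ x : Sq M, ε ≤ |(if re then (x : ℂ).re else (x : ℂ).im) - r| → f x = 0) ∧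
            1 / ((n : ℝ) + 1) ≤ ‖θ f‖} := by
        intro r hr
        unfold GoodLine at hr
        push_neg at hr
        obtain ⟨δ, hδ, hδ2⟩ := hr
        obtain ⟨n, hn⟩ := exists_nat_one_div_lt hδ
        refine Set.mem_iUnion.mpr ⟨n, ?_⟩
        intro ε hε
        obtain ⟨f, hf1, hf2, hf3⟩ := hδ2 ε hε
        exact ⟨f, hf1, hf2, le_trans hn.le hf3⟩
      refine Set.Countable.mono hsub (Set.countable_iUnion fun n => ?_)
      exact (theta_bad_finite M θ hadd hsmul K hK hbound re (1 / ((n : ℝ) + 1))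
        (by positivity)).countable
    have hNc : {r : ℝ | ¬ ∀ δ > (0:ℝ), ∃ ε > (0:ℝ),
        ν {z : ℂ | |(if re then z.re else z.im) - r| < ε} < δ}.Countable := by
      have hsub : {r : ℝ | ¬ ∀ δ > (0:ℝ), ∃ ε > (0:ℝ),
          ν {z : ℂ | |(if re then z.re else z.im) - r| < ε} < δ} ⊆
          ⋃ n : ℕ, {r : ℝ | ∀ ε > (0:ℝ),
            1 / ((n : ℝ) + 1) ≤ ν {z : ℂ | |(if re then z.re else z.im) - r| < ε}} := by
        intro r hr
        simp only [Set.mem_setOf_eq] at hr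
        push_neg at hr
        obtain ⟨δ, hδ, hδ2⟩ := hr
        obtain ⟨n, hn⟩ := exists_nat_one_div_lt hδ
        refine Set.mem_iUnion.mpr ⟨n, fun ε hε => le_trans hn.le (hδ2 ε hε)⟩
      refine Set.Countable.mono hsub (Set.countable_iUnion fun n => ?_)
      exact (nu_bad_finite D DN lam xi hsum ν hν re (1 / ((n : ℝ) + 1))
        (by positivity)).countable
    refine Set.Countable.mono ?_ (hGc.union hNc)
    intro r hr
    obtain ⟨-, hbad⟩ := hr
    rw [VeryGoodLine, not_and_or] at hbad
    rcases hbad with h | h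
    · exact Or.inl h
    · exact Or.inr h
  exact ⟨main true, main false⟩
end

section
/- Let M > 0 and S = {λ ∈ ℂ : |Re λ| ≤ M and |Im λ| ≤ M}. Let θ : C(S, ℂ) → ℂ be additive, conjugate-homogeneous (θ(c • f) = conj(c)·θ(f) for c ∈ ℂ), and satisfy |θ(f)| ≤ K·‖f‖ for all f ∈ C(S, ℂ), where K ≥ 0 and ‖·‖ is the sup norm. Let f₀, …, f_{m−1} ∈ C(S, ℂ) satisfy ‖f_i‖ ≤ 1 for all i, and have pairwise disjoint supports: for all i ≠ j and all x ∈ S, if f_i(x) ≠ 0 then f_j(x) = 0. Then Σ_{i < m} |θ(f_i)| ≤ K. -/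
/-- If `θ` is additive, conjugate-homogeneous, and bounded by `K` for the
sup norm, and `f₀, …, f_{m−1}` have sup-norm at most `1` and pairwise disjoint
supports, then `Σ_i |θ(f_i)| ≤ K`. -/
theorem stmt15
    (M : ℝ) (hM : 0 < M)
    (θ : C(Sq M, ℂ) → ℂ)
    (hadd : ∀ f g, θ (f + g) = θ f + θ g)
    (hsmul : ∀ (c : ℂ) (f), θ (c • f) = (starRingEnd ℂ) c * θ f)
    (K : ℝ) (hK : 0 ≤ K)
    (hbound : ∀ f, ‖θ f‖ ≤ K * ‖f‖)
    (m : ℕ) (f : Fin m → C(Sq M, ℂ))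
    (hf1 : ∀ i, ‖f i‖ ≤ 1)
    (hdisj : ∀ i j, i ≠ j → ∀ x : Sq M, f i x ≠ 0 → f j x = 0) :
    ∑ i : Fin m, ‖θ (f i)‖ ≤ K := by
  classical
  -- unimodular phases
  set c : Fin m → ℂ := fun i => if θ (f i) = 0 then 1 else θ (f i) / ((‖θ (f i)‖ : ℝ) : ℂ)
    with hc
  have hc1 : ∀ i, ‖c i‖ = 1 := by
    intro i
    by_cases h : θ (f i) = 0
    · simp [hc, h]
    · simp only [hc, h, if_false, norm_div, Complex.norm_real, norm_norm]
      exact div_self (by simpa using h)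
  have hkey : ∀ i, (starRingEnd ℂ) (c i) * θ (f i) = (‖θ (f i)‖ : ℂ) := by
    intro i
    by_cases h : θ (f i) = 0
    · simp [hc, h]
    · simp only [hc, h, if_false, map_div₀, Complex.conj_ofReal]
      rw [div_mul_eq_mul_div, ← Complex.normSq_eq_conj_mul_self, Complex.normSq_eq_norm_sq, sq,
        Complex.ofReal_mul, mul_div_assoc, div_self (by simpa using h), mul_one]
  -- sum function
  set g : C(Sq M, ℂ) := ∑ i, c i • f i with hg
  have hθsum : ∀ (s : Finset (Fin m)) (h : Fin m → C(Sq M, ℂ)),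
      θ (∑ i ∈ s, h i) = ∑ i ∈ s, θ (h i) := by
    intro s h
    induction s using Finset.induction with
    | empty =>
      have h0 : θ 0 = 0 := by
        have := hadd 0 0
        simpa using this
      simpa using h0
    | insert _ _ hx ih =>
      rw [Finset.sum_insert hx, hadd, ih, Finset.sum_insert hx]
  have hθg : θ g = ∑ i, (‖θ (f i)‖ : ℂ) := by
    rw [hg, hθsum]
    exact Finset.sum_congr rfl fun i _ => by rw [hsmul, hkey]
  have habs : ‖θ g‖ = ∑ i, ‖θ (f i)‖ := by
    rw [hθg]
    rw [← Complex.ofReal_sum]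
    rw [Complex.norm_real, Real.norm_eq_abs, abs_of_nonneg (Finset.sum_nonneg fun i _ => norm_nonneg _)]
  have hgnorm : ‖g‖ ≤ 1 := by
    have hne : Nonempty (Sq M) := ⟨⟨0, by simp [Sq, le_of_lt hM]⟩⟩
    apply (ContinuousMap.norm_le_of_nonempty g).mpr
    intro x
    have hgx : g x = ∑ i, c i * f i x := by
      simp [hg, ContinuousMap.sum_apply]
    by_cases hex : ∃ i, f i x ≠ 0
    · obtain ⟨i₀, hi₀⟩ := hex
      have : g x = c i₀ * f i₀ x := by
        rw [hgx]
        apply Finset.sum_eq_single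
        · intro j _ hj
          rw [hdisj i₀ j (Ne.symm hj) x hi₀, mul_zero]
        · intro h; exact absurd (Finset.mem_univ i₀) h
      rw [this]
      calc ‖c i₀ * f i₀ x‖ = ‖c i₀‖ * ‖f i₀ x‖ := by
            simp [norm_mul]
        _ = ‖f i₀ x‖ := by rw [hc1, one_mul]
        _ ≤ ‖f i₀‖ := ContinuousMap.norm_coe_le_norm _ _
        _ ≤ 1 := hf1 i₀
    · push_neg at hex
      have : g x = 0 := by
        rw [hgx]
        exact Finset.sum_eq_zero fun i _ => by rw [hex i, mul_zero]
      simp [this]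
  calc ∑ i : Fin m, ‖θ (f i)‖ = ‖θ g‖ := habs.symm
    _ ≤ K * ‖g‖ := hbound g
    _ ≤ K * 1 := mul_le_mul_of_nonneg_left hgnorm hK
    _ = K := mul_one K
end

section
/- Let H be a complex Hilbert space, r > 0 a real number, and A a bounded linear operator on H such that A ∘ A† = A† ∘ A = r • id, where A† is the adjoint of A. Fix φ ∈ H and N ∈ ℕ, and let H_N be the linear span of {Aⁱ((A†)ʲ(φ)) : i ≤ N, j ≤ N}, H_N⁻ the span of {Aⁱ((A†)ʲ(φ)) : i < N, j ≤ N}, and H_N⁺ the span of {Aⁱ((A†)ʲ(φ)) : 1 ≤ i ≤ N, j ≤ N}. Then there exists a linear operator T on the finite-dimensional inner-product space H_N such that T† ∘ T = T ∘ T† = r • id (with T† the adjoint of T within H_N), T(x) = A(x) for every x ∈ H_N⁻, and T†(x) = A†(x) for every x ∈ H_N⁺. -/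
open ContinuousLinearMap

/-- The subspace `H_N` spanned by `Aⁱ (A†)ʲ φ` for `i ≤ N`, `j ≤ N`. -/
def HN {H : Type*} [NormedAddCommGroup H] [InnerProductSpace ℂ H] [CompleteSpace H]
    (A : H →L[ℂ] H) (φ : H) (N : ℕ) : Submodule ℂ H :=
  Submodule.span ℂ {x : H | ∃ i ≤ N, ∃ j ≤ N, x = (A ^ i) (((adjoint A) ^ j) φ)}

/-- The subspace `H_N⁻` spanned by `Aⁱ (A†)ʲ φ` for `i < N`, `j ≤ N`. -/
def HNminus {H : Type*} [NormedAddCommGroup H] [InnerProductSpace ℂ H] [CompleteSpace H]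
    (A : H →L[ℂ] H) (φ : H) (N : ℕ) : Submodule ℂ H :=
  Submodule.span ℂ {x : H | ∃ i < N, ∃ j ≤ N, x = (A ^ i) (((adjoint A) ^ j) φ)}

/-- The subspace `H_N⁺` spanned by `Aⁱ (A†)ʲ φ` for `1 ≤ i ≤ N`, `j ≤ N`. -/
def HNplus {H : Type*} [NormedAddCommGroup H] [InnerProductSpace ℂ H] [CompleteSpace H]
    (A : H →L[ℂ] H) (φ : H) (N : ℕ) : Submodule ℂ H :=
  Submodule.span ℂ {x : H | ∃ i, 1 ≤ i ∧ i ≤ N ∧ ∃ j ≤ N, x = (A ^ i) (((adjoint A) ^ j) φ)}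

instance {H : Type*} [NormedAddCommGroup H] [InnerProductSpace ℂ H] [CompleteSpace H]
    (A : H →L[ℂ] H) (φ : H) (N : ℕ) : FiniteDimensional ℂ (HN A φ N) := by
  apply FiniteDimensional.span_of_finite
  apply Set.Finite.subset (Set.Finite.image
    (fun p : ℕ × ℕ => (A ^ p.1) (((adjoint A) ^ p.2) φ))
    ((Set.finite_Iic N).prod (Set.finite_Iic N)))
  rintro x ⟨i, hi, j, hj, rfl⟩
  exact ⟨(i, j), ⟨hi, hj⟩, rfl⟩

/-- If `A A† = A† A = r • id` with `r > 0`, then on the finite-dimensional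
space `H_N` there is a linear operator `T` with `T† T = T T† = r • id` which agrees with
`A` on `H_N⁻` and whose adjoint agrees with `A†` on `H_N⁺`. -/
theorem stmt16
    {H : Type*} [NormedAddCommGroup H] [InnerProductSpace ℂ H] [CompleteSpace H]
    (r : ℝ) (hr : 0 < r) (A : H →L[ℂ] H)
    (h1 : A ∘L adjoint A = (r : ℂ) • ContinuousLinearMap.id ℂ H)
    (h2 : adjoint A ∘L A = (r : ℂ) • ContinuousLinearMap.id ℂ H)
    (φ : H) (N : ℕ) :
    ∃ T : HN A φ N →ₗ[ℂ] HN A φ N,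
      (LinearMap.adjoint T) ∘ₗ T = (r : ℂ) • LinearMap.id ∧
      T ∘ₗ (LinearMap.adjoint T) = (r : ℂ) • LinearMap.id ∧
      (∀ x : HN A φ N, (x : H) ∈ HNminus A φ N → (T x : H) = A x) ∧
      (∀ x : HN A φ N, (x : H) ∈ HNplus A φ N →
        ((LinearMap.adjoint T) x : H) = adjoint A x) := by
  classical
  have hsqrt : (0:ℝ) < Real.sqrt r := Real.sqrt_pos.2 hr
  have hsqrt0 : (Real.sqrt r : ℂ) ≠ 0 := by
    exact_mod_cast hsqrt.ne'
  -- A† A x = r x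
  have hAA : ∀ x : H, adjoint A (A x) = (r:ℂ) • x := fun x => by
    have := congrArg (fun f : H →L[ℂ] H => f x) h2
    simpa using this
  -- A maps HNminus into HN
  have hmapV : ∀ x : H, x ∈ HNminus A φ N → A x ∈ HN A φ N := by
    intro x hx
    have : Submodule.map (A : H →ₗ[ℂ] H) (HNminus A φ N) ≤ HN A φ N := by
      rw [HNminus, Submodule.map_span, Submodule.span_le]
      rintro _ ⟨y, ⟨i, hi, j, hj, rfl⟩, rfl⟩
      refine Submodule.subset_span ⟨i+1, hi, j, hj, ?_⟩
      simp [pow_succ']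
    exact this ⟨x, hx, rfl⟩
  -- HNminus ≤ HN
  have hle : HNminus A φ N ≤ HN A φ N := by
    apply Submodule.span_mono
    rintro x ⟨i, hi, j, hj, rfl⟩
    exact ⟨i, hi.le, j, hj, rfl⟩
  -- HNplus ⊆ A '' HNminus
  have hplus : ∀ x : H, x ∈ HNplus A φ N → ∃ y ∈ HNminus A φ N, A y = x := by
    intro x hx
    have : HNplus A φ N ≤ Submodule.map (A : H →ₗ[ℂ] H) (HNminus A φ N) := by
      rw [HNplus, Submodule.span_le]
      rintro _ ⟨i, h1i, hiN, j, hj, rfl⟩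
      obtain ⟨i, rfl⟩ := Nat.exists_eq_add_of_le h1i
      refine ⟨(A ^ i) (((adjoint A) ^ j) φ), Submodule.subset_span ⟨i, by omega, j, hj, rfl⟩, ?_⟩
      simp [pow_add]
    obtain ⟨y, hy, hxy⟩ := this hx
    exact ⟨y, hy, hxy⟩
  set V := HN A φ N
  set S : Submodule ℂ V := (HNminus A φ N).comap V.subtype with hS
  -- the map x ↦ A x from S to V
  have hmem : ∀ s : S, A ((s : V) : H) ∈ V := fun s => hmapV _ s.2
  let f0 : S →ₗ[ℂ] V :=
    LinearMap.codRestrict V ((A : H →ₗ[ℂ] H) ∘ₗ V.subtype ∘ₗ S.subtype) hmem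
  have f0_coe : ∀ s : S, ((f0 s : V) : H) = A ((s : V) : H) := fun s => rfl
  -- norm computation
  have hnorm : ∀ x : H, ‖A x‖ = Real.sqrt r * ‖x‖ := by
    intro x
    have h : (inner ℂ (A x) (A x) : ℂ) = (r:ℂ) * inner ℂ x x := by
      rw [← ContinuousLinearMap.adjoint_inner_left, hAA, inner_smul_left]
      simp [Complex.conj_ofReal]
    have h2' : ‖A x‖^2 = r * ‖x‖^2 := by
      rw [inner_self_eq_norm_sq_to_K, inner_self_eq_norm_sq_to_K,
        show (r:ℂ) = RCLike.ofReal r from rfl] at h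
      exact_mod_cast h
    calc ‖A x‖ = Real.sqrt (‖A x‖^2) := (Real.sqrt_sq (norm_nonneg _)).symm
      _ = Real.sqrt (r * ‖x‖^2) := by rw [h2']
      _ = Real.sqrt r * ‖x‖ := by
          rw [Real.sqrt_mul hr.le, Real.sqrt_sq (norm_nonneg _)]
  -- the isometry L = (√r)⁻¹ A on S
  let L : S →ₗᵢ[ℂ] V :=
    { toLinearMap := ((((Real.sqrt r)⁻¹ : ℝ)) : ℂ) • f0
      norm_map' := by
        intro s
        have h1' : ‖(f0 s : V)‖ = ‖A ((s : V) : H)‖ := rfl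
        have h2' : ‖s‖ = ‖((s : V) : H)‖ := rfl
        calc ‖(((((Real.sqrt r)⁻¹ : ℝ)) : ℂ) • f0) s‖
            = ‖((((Real.sqrt r)⁻¹ : ℝ)) : ℂ)‖ * ‖(f0 s : V)‖ := by
              simp [norm_smul]
          _ = (Real.sqrt r)⁻¹ * ‖A ((s : V) : H)‖ := by
              rw [h1']; congr 1
              simp [abs_of_nonneg (inv_nonneg.2 hsqrt.le)]
          _ = (Real.sqrt r)⁻¹ * (Real.sqrt r * ‖((s : V) : H)‖) := by rw [hnorm]
          _ = ‖s‖ := by rw [h2']; field_simp }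
  have L_coe : ∀ s : S, ((L s : V) : H) = ((((Real.sqrt r)⁻¹ : ℝ)) : ℂ) • A ((s : V) : H) := by
    intro s; rfl
  let e : V →ₗᵢ[ℂ] V := L.extend
  let T : V →ₗ[ℂ] V := ((Real.sqrt r : ℝ) : ℂ) • e.toLinearMap
  -- T agrees with A on HNminus
  have hT_apply : ∀ x : V, (x : H) ∈ HNminus A φ N → ((T x : V) : H) = A x := by
    intro x hx
    have hxS : x ∈ S := hx
    have he : e x = L ⟨x, hxS⟩ := LinearIsometry.extend_apply L ⟨x, hxS⟩
    have : (T x : V) = ((Real.sqrt r : ℝ) : ℂ) • L ⟨x, hxS⟩ := by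
      show ((Real.sqrt r : ℝ) : ℂ) • e x = _
      rw [he]
    rw [this]
    push_cast [L_coe]
    rw [smul_smul, mul_inv_cancel₀ hsqrt0, one_smul]
  -- e† ∘ e = id
  have hadj_e : LinearMap.adjoint e.toLinearMap ∘ₗ e.toLinearMap = LinearMap.id := by
    apply LinearMap.ext; intro x
    apply ext_inner_right ℂ; intro y
    simp only [LinearMap.comp_apply, LinearMap.adjoint_inner_left, LinearMap.id_apply]
    exact e.inner_map_map x y
  -- e is surjective
  have hsurj : Function.Surjective e.toLinearMap :=
    (LinearMap.injective_iff_surjective).1 e.injective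
  have hadj_e' : e.toLinearMap ∘ₗ LinearMap.adjoint e.toLinearMap = LinearMap.id := by
    apply LinearMap.ext; intro x
    obtain ⟨y, rfl⟩ := hsurj x
    have := congrArg (fun f : V →ₗ[ℂ] V => f y) hadj_e
    simp only [LinearMap.comp_apply, LinearMap.id_apply] at this ⊢
    rw [this]
  -- adjoint T
  have hadjT : LinearMap.adjoint T = ((Real.sqrt r : ℝ) : ℂ) • LinearMap.adjoint e.toLinearMap := by
    show LinearMap.adjoint (((Real.sqrt r : ℝ) : ℂ) • e.toLinearMap) = _
    rw [map_smulₛₗ]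
    congr 1
    simp [Complex.conj_ofReal]
  have hrr : ((Real.sqrt r : ℝ) : ℂ) * ((Real.sqrt r : ℝ) : ℂ) = (r : ℂ) := by
    push_cast [← Complex.ofReal_mul]
    norm_cast
    exact Real.mul_self_sqrt hr.le
  have key1 : (LinearMap.adjoint T) ∘ₗ T = (r : ℂ) • LinearMap.id := by
    rw [hadjT]
    show (((Real.sqrt r : ℝ) : ℂ) • LinearMap.adjoint e.toLinearMap) ∘ₗ
      (((Real.sqrt r : ℝ) : ℂ) • e.toLinearMap) = _
    rw [LinearMap.smul_comp, LinearMap.comp_smul, smul_smul, hrr, hadj_e]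
  have key2 : T ∘ₗ (LinearMap.adjoint T) = (r : ℂ) • LinearMap.id := by
    rw [hadjT]
    show (((Real.sqrt r : ℝ) : ℂ) • e.toLinearMap) ∘ₗ
      (((Real.sqrt r : ℝ) : ℂ) • LinearMap.adjoint e.toLinearMap) = _
    rw [LinearMap.smul_comp, LinearMap.comp_smul, smul_smul, hrr, hadj_e']
  refine ⟨T, key1, key2, hT_apply, ?_⟩
  intro x hx
  obtain ⟨y, hy, hxy⟩ := hplus (x : H) hx
  set yv : V := ⟨y, hle hy⟩ with hyv
  have hTy : T yv = x := by
    apply Subtype.ext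
    rw [hT_apply yv hy]
    exact hxy
  have h3 : (LinearMap.adjoint T) x = (r : ℂ) • yv := by
    rw [← hTy]
    have := congrArg (fun f : V →ₗ[ℂ] V => f yv) key1
    simpa using this
  have h4 : ((LinearMap.adjoint T) x : H) = (r : ℂ) • y := by
    rw [h3]; rfl
  rw [h4, ← hxy, hAA]
end

section
/- Let H be a complex Hilbert space, r > 0 a real number, and A a bounded linear operator on H such that A ∘ A† = A† ∘ A = r • id, where A† is the adjoint of A. Fix φ ∈ H and N ∈ ℕ, and let H_N be the linear span of {Aⁱ((A†)ʲ(φ)) : i ≤ N, j ≤ N}, H_N⁻ the span of {Aⁱ((A†)ʲ(φ)) : i < N, j ≤ N}, and H_N⁺ the span of {Aⁱ((A†)ʲ(φ)) : 1 ≤ i ≤ N, j ≤ N}. Then: (1) the image of H_N⁻ under A equals H_N⁺; (2) the image of H_N⁺ under A† equals H_N⁻; and (3) the orthogonal complement of H_N⁻ within H_N and the orthogonal complement of H_N⁺ within H_N have the same (finite) dimension. -/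
open ContinuousLinearMap

/-- If `A A† = A† A = r • id` with `r > 0`, then `A` maps `H_N⁻` onto
`H_N⁺`, `A†` maps `H_N⁺` onto `H_N⁻`, and the orthogonal complements of `H_N⁻` and of
`H_N⁺` within `H_N` have the same finite dimension. -/
theorem stmt17
    {H : Type*} [NormedAddCommGroup H] [InnerProductSpace ℂ H] [CompleteSpace H]
    (r : ℝ) (hr : 0 < r) (A : H →L[ℂ] H)
    (h1 : A ∘L adjoint A = (r : ℂ) • ContinuousLinearMap.id ℂ H)
    (h2 : adjoint A ∘L A = (r : ℂ) • ContinuousLinearMap.id ℂ H)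
    (φ : H) (N : ℕ) :
    Submodule.map (A : H →ₗ[ℂ] H) (HNminus A φ N) = HNplus A φ N ∧
    Submodule.map ((adjoint A : H →L[ℂ] H) : H →ₗ[ℂ] H) (HNplus A φ N) = HNminus A φ N ∧
    Module.finrank ℂ (HN A φ N ⊓ (HNminus A φ N)ᗮ : Submodule ℂ H) =
      Module.finrank ℂ (HN A φ N ⊓ (HNplus A φ N)ᗮ : Submodule ℂ H) := by
  have hrC : (r : ℂ) ≠ 0 := by exact_mod_cast hr.ne'
  have hAdA : ∀ x : H, adjoint A (A x) = (r : ℂ) • x := by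
    intro x
    have := congrArg (fun T : H →L[ℂ] H => T x) h2
    simpa using this
  -- injectivity of A
  have hinj : Function.Injective A := by
    intro x y hxy
    have : (r : ℂ) • x = (r : ℂ) • y := by rw [← hAdA, ← hAdA, hxy]
    exact smul_right_injective H hrC this
  -- part 1
  have part1 : Submodule.map (A : H →ₗ[ℂ] H) (HNminus A φ N) = HNplus A φ N := by
    rw [HNminus, HNplus, Submodule.map_span]
    congr 1
    ext x
    constructor
    · rintro ⟨y, ⟨i, hi, j, hj, rfl⟩, rfl⟩
      refine ⟨i + 1, Nat.succ_le_succ (Nat.zero_le _), hi, j, hj, ?_⟩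
      rw [pow_succ']; rfl
    · rintro ⟨i, hi1, hiN, j, hj, rfl⟩
      obtain ⟨k, rfl⟩ := Nat.exists_eq_add_of_le hi1
      refine ⟨(A ^ k) (((adjoint A) ^ j) φ), ⟨k, by omega, j, hj, rfl⟩, ?_⟩
      rw [add_comm 1 k, pow_succ']; rfl
  -- part 2
  have part2 : Submodule.map ((adjoint A : H →L[ℂ] H) : H →ₗ[ℂ] H) (HNplus A φ N) = HNminus A φ N := by
    apply le_antisymm
    · rw [HNplus, Submodule.map_span, Submodule.span_le]
      rintro x ⟨y, ⟨i, hi1, hiN, j, hj, rfl⟩, rfl⟩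
      obtain ⟨k, rfl⟩ := Nat.exists_eq_add_of_le hi1
      have : adjoint A ((A ^ (1 + k)) (((adjoint A) ^ j) φ))
          = (r : ℂ) • (A ^ k) (((adjoint A) ^ j) φ) := by
        rw [add_comm 1 k, pow_succ']
        exact hAdA _
      erw [this]
      exact Submodule.smul_mem _ _ (Submodule.subset_span ⟨k, by omega, j, hj, rfl⟩)
    · rw [HNminus, Submodule.span_le]
      rintro x ⟨i, hi, j, hj, rfl⟩
      refine ⟨(r : ℂ)⁻¹ • (A ^ (i + 1)) (((adjoint A) ^ j) φ),
        Submodule.smul_mem _ _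
          (Submodule.subset_span ⟨i + 1, by omega, by omega, j, hj, rfl⟩), ?_⟩
      rw [map_smul, pow_succ']
      show (r : ℂ)⁻¹ • adjoint A (A _) = _
      rw [hAdA, smul_smul, inv_mul_cancel₀ hrC, one_smul]
      rfl
  refine ⟨part1, part2, ?_⟩
  -- finite dimensionality of HN
  have hfin : {x : H | ∃ i ≤ N, ∃ j ≤ N, x = (A ^ i) (((adjoint A) ^ j) φ)}.Finite := by
    apply Set.Finite.subset
      (Set.Finite.image (fun p : ℕ × ℕ => (A ^ p.1) (((adjoint A) ^ p.2) φ))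
        ((Set.finite_Iic N).prod (Set.finite_Iic N)))
    rintro x ⟨i, hi, j, hj, rfl⟩
    exact ⟨(i, j), ⟨hi, hj⟩, rfl⟩
  haveI : FiniteDimensional ℂ (HN A φ N) := FiniteDimensional.span_of_finite ℂ hfin
  have hle1 : HNminus A φ N ≤ HN A φ N :=
    Submodule.span_mono (by rintro x ⟨i, hi, j, hj, rfl⟩; exact ⟨i, by omega, j, hj, rfl⟩)
  have hle2 : HNplus A φ N ≤ HN A φ N :=
    Submodule.span_mono (by rintro x ⟨i, _, hiN, j, hj, rfl⟩; exact ⟨i, hiN, j, hj, rfl⟩)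
  have hrank : Module.finrank ℂ (HNminus A φ N) = Module.finrank ℂ (HNplus A φ N) := by
    rw [← part1]
    haveI : FiniteDimensional ℂ (HNminus A φ N) := Submodule.finiteDimensional_of_le hle1
    exact (Submodule.equivMapOfInjective (A : H →ₗ[ℂ] H) hinj (HNminus A φ N)).finrank_eq
  have e1 := Submodule.finrank_add_inf_finrank_orthogonal hle1
  have e2 := Submodule.finrank_add_inf_finrank_orthogonal hle2
  rw [inf_comm]
  rw [inf_comm (HN A φ N)]
  omega
end
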